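/- Two permutations act equally on a nominal term if and only if they agree on its free atoms: π·r = π'·r iff π(a) = π'(a) for every a ∈ fa(r), where terms are quotiented by α-equivalence. -/

import Mathlib

abbrev Atom := ℕ

def FinPermGroup : Subgroup (Equiv.Perm Atom) where
  carrier := {π | {a | π a ≠ a}.Finite}
  one_mem' := by simp
  mul_mem' := by
    intro π π' hπ hπ'
    refine Set.Finite.subset (Set.Finite.union hπ hπ') fun a ha => ?_
    by_contra h
    simp only [Set.mem_union, Set.mem_setOf_eq, not_or, not_not] at h
    exact ha (show π (π' a) = a by rw [h.2, h.1])
  inv_mem' := by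
    intro π hπ
    have h : {a | π⁻¹ a ≠ a} = {a | π a ≠ a} := by
      ext a
      simp only [Set.mem_setOf_eq, ne_eq, not_iff_not]
      rw [Equiv.Perm.inv_eq_iff_eq, eq_comm]
    show {a | π⁻¹ a ≠ a}.Finite
    rw [h]; exact hπ

abbrev FinPerm : Type := FinPermGroup

def PSupports {X : Type*} [MulAction FinPerm X] (A : Set Atom) (x : X) : Prop :=
  ∀ π π' : FinPerm, (∀ a ∈ A, π.1 a = π'.1 a) → π • x = π' • x

def PIsLeastSupport {X : Type*} [MulAction FinPerm X] (S : Set Atom) (x : X) : Prop :=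
  PSupports S x ∧ ∀ A, PSupports A x → S ⊆ A

def IsPermissionSet (S : Set Atom) : Prop :=
  ∃ A B : Finset Atom, (↑A : Set Atom) ⊆ {n | n % 2 = 1} ∧ (↑B : Set Atom) ⊆ {n | n % 2 = 0} ∧
    S = ({n : Atom | n % 2 = 0} ∪ ↑A) \ ↑B

def swapPerm (a b : Atom) : FinPerm :=
  ⟨Equiv.swap a b, by
    show {c | Equiv.swap a b c ≠ c}.Finite
    apply Set.Finite.subset ((Set.finite_singleton b).insert a)
    intro c hc
    by_contra hn
    simp only [Set.mem_insert_iff, Set.mem_singleton_iff, not_or] at hn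
    exact hc (Equiv.swap_apply_of_ne_of_ne hn.1 hn.2)⟩

instance : SMul FinPerm Atom := ⟨fun π a => π.1 a⟩
instance : MulAction FinPerm Atom where
  one_smul _ := rfl
  mul_smul _ _ _ := rfl

/-- Permissive-nominal terms over a single name sort, with unknowns `V` (each with a
permission set given separately) and term-formers `F`: atoms, pairs (tuples),
term-former applications, atoms-abstractions, and moderated unknowns `π·X`. -/
inductive Tm (V F : Type) : Type
  | atom : Atom → Tm V F
  | pair : Tm V F → Tm V F → Tm V F
  | app : F → Tm V F → Tm V F
  | abs : Atom → Tm V F → Tm V F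
  | var : FinPerm → V → Tm V F

/-- The permutation action on terms. -/
def pact {V F : Type} (π : FinPerm) : Tm V F → Tm V F
  | .atom a => .atom (π.1 a)
  | .pair s t => .pair (pact π s) (pact π t)
  | .app f t => .app f (pact π t)
  | .abs a t => .abs (π.1 a) (pact π t)
  | .var π' X => .var (π * π') X

/-- Free atoms of a term. -/
def fa {V F : Type} (pmss : V → Set Atom) : Tm V F → Set Atom
  | .atom a => {a}
  | .pair s t => fa pmss s ∪ fa pmss t
  | .app _ t => fa pmss t
  | .abs a t => fa pmss t \ {a}
  | .var π X => π.1 '' pmss X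

/-- α-equivalence: the least congruence which is an equivalence relation and identifies
`(b a)·t` with `t` whenever `a, b ∉ fa t`. -/
inductive Aeq {V F : Type} (pmss : V → Set Atom) : Tm V F → Tm V F → Prop
  | refl (t) : Aeq pmss t t
  | symm {s t} : Aeq pmss s t → Aeq pmss t s
  | trans {s t u} : Aeq pmss s t → Aeq pmss t u → Aeq pmss s u
  | pair {s s' t t'} : Aeq pmss s s' → Aeq pmss t t' →
      Aeq pmss (.pair s t) (.pair s' t')
  | app (f) {t t'} : Aeq pmss t t' → Aeq pmss (.app f t) (.app f t')
  | abs (a) {t t'} : Aeq pmss t t' → Aeq pmss (.abs a t) (.abs a t')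
  | swap {a b t} : a ∉ fa pmss t → b ∉ fa pmss t →
      Aeq pmss (pact (swapPerm b a) t) t


/-! ### Auxiliary development -/

section Aux

variable {V F : Type}

lemma finperm_ext {π ρ : FinPerm} (h : ∀ a, π.1 a = ρ.1 a) : π = ρ :=
  Subtype.ext (Equiv.ext h)

@[simp] lemma finperm_mul_apply (π ρ : FinPerm) (a : Atom) :
    (π * ρ).1 a = π.1 (ρ.1 a) := rfl

@[simp] lemma finperm_one_apply (a : Atom) : (1 : FinPerm).1 a = a := rfl

@[simp] lemma swapPerm_fst (a b : Atom) : (swapPerm a b).1 = Equiv.swap a b := rfl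

lemma swapPerm_self (a : Atom) : swapPerm a a = 1 :=
  finperm_ext fun c => by simp

lemma swapPerm_mul_self (a b : Atom) : swapPerm a b * swapPerm a b = 1 :=
  finperm_ext fun c => by simp

lemma mul_swapPerm (π : FinPerm) (a b : Atom) :
    π * swapPerm a b = swapPerm (π.1 a) (π.1 b) * π := by
  refine finperm_ext fun c => ?_
  simp only [finperm_mul_apply, swapPerm_fst]
  rcases eq_or_ne c a with rfl | hca
  · simp
  rcases eq_or_ne c b with rfl | hcb
  · simp
  rw [Equiv.swap_apply_of_ne_of_ne hca hcb,
    Equiv.swap_apply_of_ne_of_ne (fun h => hca (π.1.injective h))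
      (fun h => hcb (π.1.injective h))]

lemma pact_one (t : Tm V F) : pact (1 : FinPerm) t = t := by
  induction t with
  | atom a => rfl
  | pair s t ihs iht => simp [pact, ihs, iht]
  | app f t ih => simp [pact, ih]
  | abs a t ih => simp [pact, ih]
  | var ρ X => simp [pact]

lemma pact_mul (π ρ : FinPerm) (t : Tm V F) :
    pact (π * ρ) t = pact π (pact ρ t) := by
  induction t with
  | atom a => rfl
  | pair s t ihs iht => simp [pact, ihs, iht]
  | app f t ih => simp [pact, ih]
  | abs a t ih => simp [pact, ih]
  | var σ X => simp [pact, mul_assoc]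

lemma fa_pact (pmss : V → Set Atom) (π : FinPerm) (t : Tm V F) :
    fa pmss (pact π t) = π.1 '' fa pmss t := by
  induction t with
  | atom a => simp [pact, fa]
  | pair s t ihs iht => simp [pact, fa, ihs, iht, Set.image_union]
  | app f t ih => simp [pact, fa, ih]
  | abs a t ih =>
      simp only [pact, fa, ih]
      rw [Set.image_diff π.1.injective, Set.image_singleton]
  | var ρ X =>
      simp only [pact, fa]
      rw [← Set.image_comp]
      rfl

lemma mem_image_pact {pmss : V → Set Atom} {π : FinPerm} {t : Tm V F} {a : Atom}
    (h : a ∉ fa pmss t) : π.1 a ∉ fa pmss (pact π t) := by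
  rw [fa_pact]
  rintro ⟨b, hb, hba⟩
  exact h (π.1.injective hba ▸ hb)

/-- Equivariance of α-equivalence. -/
lemma aeq_pact {pmss : V → Set Atom} {s t : Tm V F} (h : Aeq pmss s t) (π : FinPerm) :
    Aeq pmss (pact π s) (pact π t) := by
  induction h with
  | refl t => exact .refl _
  | symm _ ih => exact .symm ih
  | trans _ _ ih1 ih2 => exact .trans ih1 ih2
  | pair _ _ ih1 ih2 => exact .pair ih1 ih2
  | app f _ ih => exact .app f ih
  | abs a _ ih => exact .abs _ ih
  | @swap a b t ha hb =>
      rw [← pact_mul, mul_swapPerm, pact_mul]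
      exact .swap (mem_image_pact ha) (mem_image_pact hb)

lemma image_fix {f : Atom → Atom} {S : Set Atom} (h : ∀ a ∈ S, f a = a) :
    f '' S = S := by
  ext x
  constructor
  · rintro ⟨a, ha, rfl⟩; rwa [h a ha]
  · intro hx; exact ⟨x, hx, h x hx⟩

/-- A finite permutation fixing the free atoms of a term acts trivially up to `Aeq`. -/
lemma aeq_fix (pmss : V → Set Atom) :
    ∀ (n : ℕ) (σ : FinPerm) (hs : {a | σ.1 a ≠ a}.Finite), hs.toFinset.card ≤ n →
      ∀ t : Tm V F, (∀ a ∈ fa pmss t, σ.1 a = a) → Aeq pmss (pact σ t) t := by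
  intro n
  induction n with
  | zero =>
      intro σ hs hcard t _
      have hσ : σ = 1 := by
        refine finperm_ext fun a => ?_
        by_contra h
        have : a ∈ hs.toFinset := by simpa using h
        simp [Finset.card_eq_zero.mp (Nat.le_zero.mp hcard)] at this
      rw [hσ, pact_one]
      exact .refl _
  | succ n ih =>
      intro σ hs hcard t hfix
      by_cases hone : ∀ a, σ.1 a = a
      · rw [finperm_ext (ρ := 1) hone, pact_one]; exact .refl _
      push_neg at hone
      obtain ⟨a, ha⟩ := hone
      set b := σ.1 a with hb
      set τ := swapPerm b a with hτ
      set σ' := τ * σ with hσ'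
      have hσ'a : σ'.1 a = a := by simp [hσ', hτ, ← hb]
      have hfixc : ∀ c, σ.1 c = c → c ≠ a → σ'.1 c = c := by
        intro c hc hca
        have hcb : c ≠ b := by
          rintro rfl
          exact ha (σ.1.injective hc)
        simp [hσ', hτ, hc, Equiv.swap_apply_of_ne_of_ne hcb hca]
      have hsub : {c | σ'.1 c ≠ c} ⊆ {c | σ.1 c ≠ c} \ {a} := by
        intro c hc
        simp only [Set.mem_setOf_eq] at hc
        constructor
        · intro hcfix
          rcases eq_or_ne c a with rfl | hca
          · exact hc hσ'a
          · exact hc (hfixc c hcfix hca)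
        · rintro rfl; exact hc hσ'a
      have hs' : {c | σ'.1 c ≠ c}.Finite := hs.diff.subset hsub
      have hmemA : a ∈ hs.toFinset := by simpa using ha
      have hcard' : hs'.toFinset.card ≤ n := by
        have h1 : hs'.toFinset ⊆ hs.toFinset.erase a := by
          intro c hc
          have := hsub (hs'.mem_toFinset.mp hc)
          simp only [Set.mem_diff, Set.mem_singleton_iff] at this
          exact Finset.mem_erase.mpr ⟨this.2, hs.mem_toFinset.mpr this.1⟩
        calc hs'.toFinset.card ≤ (hs.toFinset.erase a).card := Finset.card_le_card h1
          _ = hs.toFinset.card - 1 := Finset.card_erase_of_mem hmemA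
          _ ≤ n := by omega
      have hanotfa : a ∉ fa pmss t := fun h => ha (hfix a h)
      have hbnotfa : b ∉ fa pmss t := by
        intro h
        have := hfix b h
        rw [hb] at this
        exact ha (σ.1.injective this)
      have hfix' : ∀ c ∈ fa pmss t, σ'.1 c = c := by
        intro c hc
        exact hfixc c (hfix c hc) (fun h => hanotfa (h ▸ hc))
      have hmain : Aeq pmss (pact σ' t) t := ih σ' hs' hcard' t hfix'
      have hfa' : fa pmss (pact σ' t) = fa pmss t := by
        rw [fa_pact]; exact image_fix hfix'
      have hswap : Aeq pmss (pact τ (pact σ' t)) (pact σ' t) := by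
        refine Aeq.swap ?_ ?_ <;> rw [hfa']
        · exact hanotfa
        · exact hbnotfa
      have heq : pact τ (pact σ' t) = pact σ t := by
        rw [← pact_mul, hσ', ← mul_assoc, hτ, swapPerm_mul_self, one_mul]
      rw [heq] at hswap
      exact hswap.trans hmain

/-- Renaming of the abstracted atom. -/
lemma abs_rename {pmss : V → Set Atom} (c a : Atom) (t : Tm V F)
    (hc : c ∉ fa pmss t) :
    Aeq pmss (Tm.abs a t) (Tm.abs c (pact (swapPerm c a) t)) := by
  rcases eq_or_ne c a with rfl | hca
  · rw [swapPerm_self, pact_one]; exact .refl _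
  have key : pact (swapPerm c a) (Tm.abs a t) = Tm.abs c (pact (swapPerm c a) t) := by
    simp [pact]
  refine Aeq.symm ?_
  rw [← key]
  refine Aeq.swap ?_ ?_
  · simp [fa]
  · simp only [fa, Set.mem_diff, Set.mem_singleton_iff, not_and, not_not]
    intro h; exact absurd h hc

/-- Free atoms are covered by the evens together with a finite set. -/
lemma fa_sub {pmss : V → Set Atom} (hpm : ∀ X : V, IsPermissionSet (pmss X)) :
    ∀ t : Tm V F, ∃ S : Finset Atom, fa pmss t ⊆ {n : Atom | n % 2 = 0} ∪ ↑S := by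
  intro t
  induction t with
  | atom a => exact ⟨{a}, by simp [fa]⟩
  | pair s t ihs iht =>
      obtain ⟨S1, h1⟩ := ihs; obtain ⟨S2, h2⟩ := iht
      refine ⟨S1 ∪ S2, ?_⟩
      simp only [fa, Set.union_subset_iff]
      constructor
      · exact h1.trans (by intro x; simp; tauto)
      · exact h2.trans (by intro x; simp; tauto)
  | app f t ih => exact ih
  | abs a t ih =>
      obtain ⟨S, h⟩ := ih
      exact ⟨S, (Set.diff_subset).trans h⟩
  | var ρ X =>
      obtain ⟨A, B, hA, _, hS⟩ := hpm X
      have hρ : {x | ρ.1 x ≠ x}.Finite := ρ.2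
      refine ⟨hρ.toFinset.image ρ.1 ∪ A.image ρ.1, ?_⟩
      rintro x ⟨y, hy, rfl⟩
      rw [hS] at hy
      rcases hy.1 with hy' | hy'
      · by_cases hfix : ρ.1 y = y
        · left; rw [hfix]; exact hy'
        · right
          simp only [Finset.coe_union, Set.mem_union, Finset.coe_image,
            Set.mem_image, Finset.mem_coe, Set.Finite.mem_toFinset]
          exact Or.inl ⟨y, hfix, rfl⟩
      · right
        simp only [Finset.coe_union, Set.mem_union, Finset.coe_image,
          Set.mem_image, Finset.mem_coe, Set.Finite.mem_toFinset]
        exact Or.inr ⟨y, hy', rfl⟩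

/-- Key direction: agreement on free atoms implies α-equivalence of the actions. -/
lemma aeq_of_agree {pmss : V → Set Atom} (hpm : ∀ X : V, IsPermissionSet (pmss X)) :
    ∀ (t : Tm V F) (π π' : FinPerm),
      (∀ a ∈ fa pmss t, π.1 a = π'.1 a) → Aeq pmss (pact π t) (pact π' t) := by
  intro t
  induction t with
  | atom a =>
      intro π π' h
      show Aeq pmss (.atom (π.1 a)) (.atom (π'.1 a))
      rw [h a rfl]; exact .refl _
  | pair s t ihs iht =>
      intro π π' h
      exact .pair (ihs π π' fun a ha => h a (Or.inl ha)) (iht π π' fun a ha => h a (Or.inr ha))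
  | app f t ih =>
      intro π π' h
      exact .app f (ih π π' h)
  | abs a t ih =>
      intro π π' h
      obtain ⟨S1, h1⟩ := fa_sub hpm (pact π t)
      obtain ⟨S2, h2⟩ := fa_sub hpm (pact π' t)
      obtain ⟨c, hc⟩ : ∃ c : ℕ, c = 2 * ((S1 ∪ S2).sup id) + 1 := ⟨_, rfl⟩
      have hodd : c % 2 = 1 := by omega
      have hcS : c ∉ (↑(S1 ∪ S2) : Set Atom) := by
        intro hmem
        have := Finset.le_sup (f := id) (Finset.mem_coe.mp hmem)
        simp only [id] at this
        omega
      have hc1 : c ∉ fa pmss (pact π t) := by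
        intro hmem
        rcases h1 hmem with h' | h'
        · have h'' : c % 2 = 0 := h'; omega
        · exact hcS (by simp only [Finset.coe_union, Set.mem_union]; left; exact h')
      have hc2 : c ∉ fa pmss (pact π' t) := by
        intro hmem
        rcases h2 hmem with h' | h'
        · have h'' : c % 2 = 0 := h'; omega
        · exact hcS (by simp only [Finset.coe_union, Set.mem_union]; right; exact h')
      have e1 : Aeq pmss (Tm.abs (π.1 a) (pact π t))
          (Tm.abs c (pact (swapPerm c (π.1 a) * π) t)) := by
        rw [pact_mul]; exact abs_rename c (π.1 a) (pact π t) hc1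
      have e2 : Aeq pmss (Tm.abs (π'.1 a) (pact π' t))
          (Tm.abs c (pact (swapPerm c (π'.1 a) * π') t)) := by
        rw [pact_mul]; exact abs_rename c (π'.1 a) (pact π' t) hc2
      have hmid : Aeq pmss (Tm.abs c (pact (swapPerm c (π.1 a) * π) t))
          (Tm.abs c (pact (swapPerm c (π'.1 a) * π') t)) := by
        refine Aeq.abs c (ih _ _ ?_)
        intro b hb
        rcases eq_or_ne b a with rfl | hba
        · simp
        have hbb : π.1 b = π'.1 b := h b ⟨hb, hba⟩
        have hπba : π.1 b ≠ π.1 a := fun hh => hba (π.1.injective hh)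
        have hπ'ba : π'.1 b ≠ π'.1 a := fun hh => hba (π'.1.injective hh)
        have hπbc : π.1 b ≠ c := by
          intro hh
          exact hc1 (hh ▸ (fa_pact pmss π t ▸ Set.mem_image_of_mem π.1 hb))
        have hπ'bc : π'.1 b ≠ c := by
          intro hh
          exact hc2 (hh ▸ (fa_pact pmss π' t ▸ Set.mem_image_of_mem π'.1 hb))
        simp only [finperm_mul_apply, swapPerm_fst]
        rw [Equiv.swap_apply_of_ne_of_ne hπbc hπba,
          Equiv.swap_apply_of_ne_of_ne hπ'bc hπ'ba]
        exact hbb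
      show Aeq pmss (.abs (π.1 a) (pact π t)) (.abs (π'.1 a) (pact π' t))
      exact (e1.trans hmid).trans e2.symm
  | var ρ X =>
      intro π π' h
      have hfix : ∀ a ∈ fa pmss (Tm.var ρ X : Tm V F), (π'⁻¹ * π).1 a = a := by
        intro a ha
        have := h a ha
        show π'⁻¹.1 (π.1 a) = a
        rw [this]
        exact π'.1.symm_apply_apply a
      have hs : {a | (π'⁻¹ * π).1 a ≠ a}.Finite := (π'⁻¹ * π).2
      have key : Aeq pmss (pact (π'⁻¹ * π) (Tm.var ρ X)) (Tm.var ρ X) :=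
        aeq_fix pmss hs.toFinset.card (π'⁻¹ * π) hs le_rfl _ hfix
      have := aeq_pact key π'
      rw [← pact_mul, ← mul_assoc, mul_inv_cancel, one_mul] at this
      exact this

/-! ### de Bruijn translation, for the converse direction -/

inductive Db (V F : Type) (pmss : V → Set Atom) : Type
  | name : Atom ⊕ ℕ → Db V F pmss
  | pair : Db V F pmss → Db V F pmss → Db V F pmss
  | app : F → Db V F pmss → Db V F pmss
  | abs : Db V F pmss → Db V F pmss
  | var : (X : V) → (pmss X → Atom ⊕ ℕ) → Db V F pmss

def lookupA (a : Atom) : List Atom → Atom ⊕ ℕ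
  | [] => .inl a
  | b :: l => if a = b then .inr 0 else (lookupA a l).map id Nat.succ

def tr (pmss : V → Set Atom) : Tm V F → List Atom → Db V F pmss
  | .atom a, ctx => .name (lookupA a ctx)
  | .pair s t, ctx => .pair (tr pmss s ctx) (tr pmss t ctx)
  | .app f t, ctx => .app f (tr pmss t ctx)
  | .abs a t, ctx => .abs (tr pmss t (a :: ctx))
  | .var ρ X, ctx => .var X fun p => lookupA (ρ.1 p.1) ctx

lemma shift_inj : Function.Injective (Sum.map (id : Atom → Atom) Nat.succ) := by
  rintro (x | x) (y | y) h <;> simp_all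

lemma tr_pact {pmss : V → Set Atom} :
    ∀ (t : Tm V F) (π : FinPerm) (ctx ctx' : List Atom),
      (∀ a ∈ fa pmss t, lookupA (π.1 a) ctx' = lookupA a ctx) →
      tr pmss (pact π t) ctx' = tr pmss t ctx := by
  intro t
  induction t with
  | atom a =>
      intro π ctx ctx' h
      show Db.name (lookupA (π.1 a) ctx') = Db.name (lookupA a ctx)
      rw [h a rfl]
  | pair s t ihs iht =>
      intro π ctx ctx' h
      show Db.pair _ _ = Db.pair _ _
      rw [ihs π ctx ctx' fun a ha => h a (Or.inl ha),
        iht π ctx ctx' fun a ha => h a (Or.inr ha)]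
  | app f t ih =>
      intro π ctx ctx' h
      show Db.app f _ = Db.app f _
      rw [ih π ctx ctx' h]
  | abs a t ih =>
      intro π ctx ctx' h
      show Db.abs (tr pmss (pact π t) (π.1 a :: ctx')) = Db.abs (tr pmss t (a :: ctx))
      rw [ih π (a :: ctx) (π.1 a :: ctx')]
      intro b hb
      rcases eq_or_ne b a with rfl | hba
      · simp [lookupA]
      · have : π.1 b ≠ π.1 a := fun hh => hba (π.1.injective hh)
        simp only [lookupA, if_neg this, if_neg hba]
        rw [h b ⟨hb, hba⟩]
  | var ρ X =>
      intro π ctx ctx' h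
      show Db.var X _ = Db.var X _
      congr 1
      funext p
      exact h (ρ.1 p.1) ⟨p.1, p.2, rfl⟩

lemma aeq_tr {pmss : V → Set Atom} {s t : Tm V F} (h : Aeq pmss s t) :
    ∀ ctx, tr pmss s ctx = tr pmss t ctx := by
  induction h with
  | refl t => intro ctx; rfl
  | symm _ ih => intro ctx; exact (ih ctx).symm
  | trans _ _ ih1 ih2 => intro ctx; exact (ih1 ctx).trans (ih2 ctx)
  | pair _ _ ih1 ih2 =>
      intro ctx
      show Db.pair _ _ = Db.pair _ _
      rw [ih1 ctx, ih2 ctx]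
  | app f _ ih =>
      intro ctx
      show Db.app f _ = Db.app f _
      rw [ih ctx]
  | abs a _ ih =>
      intro ctx
      show Db.abs _ = Db.abs _
      rw [ih (a :: ctx)]
  | @swap a b t ha hb =>
      intro ctx
      refine tr_pact t (swapPerm b a) ctx ctx ?_
      intro c hc
      have hca : c ≠ a := fun hh => ha (hh ▸ hc)
      have hcb : c ≠ b := fun hh => hb (hh ▸ hc)
      rw [show (swapPerm b a).1 c = c from Equiv.swap_apply_of_ne_of_ne hcb hca]

lemma tr_inj {pmss : V → Set Atom} :
    ∀ (r : Tm V F) (π π' : FinPerm) (ctx ctx' : List Atom),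
      tr pmss (pact π r) ctx = tr pmss (pact π' r) ctx' →
      ∀ a ∈ fa pmss r, lookupA (π.1 a) ctx = lookupA (π'.1 a) ctx' := by
  intro r
  induction r with
  | atom a =>
      intro π π' ctx ctx' h b hb
      have hb' : b = a := hb
      subst hb'
      injection h
  | pair s t ihs iht =>
      intro π π' ctx ctx' h b hb
      injection h with h1 h2
      rcases hb with hb | hb
      · exact ihs π π' ctx ctx' h1 b hb
      · exact iht π π' ctx ctx' h2 b hb
  | app f t ih =>
      intro π π' ctx ctx' h b hb
      injection h with _ h2
      exact ih π π' ctx ctx' h2 b hb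
  | abs a t ih =>
      intro π π' ctx ctx' h b hb
      injection h with h1
      have key := ih π π' (π.1 a :: ctx) (π'.1 a :: ctx') h1 b hb.1
      have hba : b ≠ a := hb.2
      have h1' : π.1 b ≠ π.1 a := fun hh => hba (π.1.injective hh)
      have h2' : π'.1 b ≠ π'.1 a := fun hh => hba (π'.1.injective hh)
      simp only [lookupA, if_neg h1', if_neg h2'] at key
      exact shift_inj key
  | var ρ X =>
      intro π π' ctx ctx' h b hb
      injection h with h1 h2
      obtain ⟨c, hc, rfl⟩ := hb
      exact congrFun h2 ⟨c, hc⟩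

end Aux

theorem stmt19 {V F : Type} (pmss : V → Set Atom)
    (hpm : ∀ X : V, IsPermissionSet (pmss X))
    (π π' : FinPerm) (r : Tm V F) :
    Aeq pmss (pact π r) (pact π' r) ↔ ∀ a ∈ fa pmss r, π.1 a = π'.1 a := by
  constructor
  · intro h a ha
    have key := tr_inj r π π' [] [] (aeq_tr h []) a ha
    simpa [lookupA] using key
  · intro h
    exact aeq_of_agree hpm r π π' h
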